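/- Let u : Fin N → ℝ be a probability mass function with positive entries. Define f(ϖ, x) = u x * exp(ϖ*(1 - u x)) / (∑ i, u i * exp(ϖ*(1 - u i))) and g(ϖ) = (∑ i, (u i)^2 * exp(ϖ*(1 - u i))) / (∑ i, u i * exp(ϖ*(1 - u i))). Then the partial derivative of f(·, x) at ϖ has the same sign as g(ϖ) - u x; in particular, if g(ϖ) > u x then ∂f/∂ϖ(ϖ, x) > 0, and if g(ϖ) < u x then ∂f/∂ϖ(ϖ, x) < 0. -/

import Mathlib

theorem stmt_7 (N : ℕ) (hN : 2 ≤ N) (u : Fin N → ℝ)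
    (hpos : ∀ i, 0 < u i) (hsum : ∑ i, u i = 1)
    (x : Fin N) (ϖ : ℝ) :
    (u x < (∑ i, (u i) ^ 2 * Real.exp (ϖ * (1 - u i))) /
        (∑ i, u i * Real.exp (ϖ * (1 - u i))) →
      0 < deriv (fun w : ℝ => u x * Real.exp (w * (1 - u x)) /
        (∑ i, u i * Real.exp (w * (1 - u i)))) ϖ) ∧
    ((∑ i, (u i) ^ 2 * Real.exp (ϖ * (1 - u i))) /
        (∑ i, u i * Real.exp (ϖ * (1 - u i))) < u x →
      deriv (fun w : ℝ => u x * Real.exp (w * (1 - u x)) /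
        (∑ i, u i * Real.exp (w * (1 - u i)))) ϖ < 0) := by
  have hNe : Nonempty (Fin N) := ⟨⟨0, by omega⟩⟩
  set S : ℝ := ∑ i, u i * Real.exp (ϖ * (1 - u i)) with hSdef
  set T : ℝ := ∑ i, (u i) ^ 2 * Real.exp (ϖ * (1 - u i)) with hTdef
  have hSpos : 0 < S := by
    apply Finset.sum_pos
    · intro i _
      exact mul_pos (hpos i) (Real.exp_pos _)
    · exact Finset.univ_nonempty
  -- derivative of each term
  have hterm : ∀ (c : ℝ), HasDerivAt (fun w : ℝ => Real.exp (w * c)) (c * Real.exp (ϖ * c)) ϖ := by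
    intro c
    have := ((hasDerivAt_id ϖ).mul_const c).exp
    simpa [mul_comm] using this
  have hn : HasDerivAt (fun w : ℝ => u x * Real.exp (w * (1 - u x)))
      (u x * ((1 - u x) * Real.exp (ϖ * (1 - u x)))) ϖ := (hterm (1 - u x)).const_mul _
  have hS : HasDerivAt (fun w : ℝ => ∑ i, u i * Real.exp (w * (1 - u i)))
      (∑ i, u i * ((1 - u i) * Real.exp (ϖ * (1 - u i)))) ϖ := by
    apply HasDerivAt.fun_sum
    intro i _
    exact (hterm (1 - u i)).const_mul _
  have hdiv := hn.div hS (ne_of_gt hSpos)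
  have hderiv : deriv (fun w : ℝ => u x * Real.exp (w * (1 - u x)) /
      (∑ i, u i * Real.exp (w * (1 - u i)))) ϖ
      = (u x * ((1 - u x) * Real.exp (ϖ * (1 - u x))) * S
        - u x * Real.exp (ϖ * (1 - u x)) * (∑ i, u i * ((1 - u i) * Real.exp (ϖ * (1 - u i))))) / S ^ 2 :=
    hdiv.deriv
  have hSdiff : (∑ i, u i * ((1 - u i) * Real.exp (ϖ * (1 - u i)))) = S - T := by
    rw [hSdef, hTdef, ← Finset.sum_sub_distrib]
    congr 1
    ext i
    ring
  have key : deriv (fun w : ℝ => u x * Real.exp (w * (1 - u x)) /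
      (∑ i, u i * Real.exp (w * (1 - u i)))) ϖ
      = u x * Real.exp (ϖ * (1 - u x)) * (T - u x * S) / S ^ 2 := by
    rw [hderiv, hSdiff]; ring
  have hfac : 0 < u x * Real.exp (ϖ * (1 - u x)) := mul_pos (hpos x) (Real.exp_pos _)
  constructor
  · intro h
    rw [key]
    apply div_pos
    · apply mul_pos hfac
      rw [lt_div_iff₀ hSpos] at h
      linarith
    · positivity
  · intro h
    rw [key]
    apply div_neg_of_neg_of_pos
    · apply mul_neg_of_pos_of_neg hfac
      rw [div_lt_iff₀ hSpos] at h
      linarith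
    · positivity
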